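/- The ranked agenda rule RA satisfies overlapping agenda separability: for every constrained agenda (A,Γ), every independent overlapping decomposition {A1,A2} of A, and every profile P over A, if for all J1 ∈ RA(P↓A1) and J2 ∈ RA(P↓A2) we have J1 ∩ A2 = J2 ∩ A1, then RA(P) = { J1 ∪ J2 : J1 ∈ RA(P↓A1), J2 ∈ RA(P↓A2) }. -/

import Mathlib

/-!
Judgment aggregation framework.
Valuations form a nonempty finite type `V`; a formula is identified with its set of
models, i.e. a `Finset V`; negation is complement.
-/

namespace JA

variable {V : Type*} [Fintype V] [DecidableEq V]

/-- A set of formulas `J` is `Γ`-consistent if some model of `Γ` satisfies every formula of `J`. -/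
def Consistent (Γ : Finset V) (J : Finset (Finset V)) : Prop :=
  ∃ v ∈ Γ, ∀ φ ∈ J, v ∈ φ

/-- `A` is an agenda: it is closed under negation (complement) and contains no formula
with an empty or full set of models. -/
def IsAgenda (A : Finset (Finset V)) : Prop :=
  (∀ φ ∈ A, φᶜ ∈ A) ∧ ∀ φ ∈ A, φ.Nonempty ∧ φ ≠ Finset.univ

/-- The set `𝒥_A` of complete `Γ`-consistent judgment sets over the agenda `A`. -/
def CCJ (Γ : Finset V) (A : Finset (Finset V)) : Set (Finset (Finset V)) :=
  {J | J ⊆ A ∧ (∀ φ ∈ A, φ ∈ J ∨ φᶜ ∈ J) ∧ Consistent Γ J}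

/-- A profile is an `n`-tuple of complete `Γ`-consistent judgment sets. -/
def IsProfile (Γ : Finset V) (A : Finset (Finset V)) {n : ℕ}
    (P : Fin n → Finset (Finset V)) : Prop :=
  ∀ i, P i ∈ CCJ Γ A

/-- Restriction `P↓B` of a profile `P` to a sub-agenda `B`. -/
def restrict {n : ℕ} (P : Fin n → Finset (Finset V)) (B : Finset (Finset V)) :
    Fin n → Finset (Finset V) :=
  fun i => P i ∩ B

/-- `{A1, A2}` is an independent partition of `A`. -/
def IndepPartition (Γ : Finset V) (A A1 A2 : Finset (Finset V)) : Prop :=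
  A1 ∪ A2 = A ∧ Disjoint A1 A2 ∧ IsAgenda A1 ∧ IsAgenda A2 ∧
    ∀ J1 ∈ CCJ Γ A1, ∀ J2 ∈ CCJ Γ A2, Consistent Γ (J1 ∪ J2)

/-- `{A1, A2}` is an independent overlapping decomposition (IOD) of `A`. -/
def IOD (Γ : Finset V) (A A1 A2 : Finset (Finset V)) : Prop :=
  A1 ∪ A2 = A ∧ IsAgenda A1 ∧ IsAgenda A2 ∧
    ∀ J1 ∈ CCJ Γ A1, ∀ J2 ∈ CCJ Γ A2, J1 ∩ A2 = J2 ∩ A1 → J1 ∪ J2 ∈ CCJ Γ A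

/-- The set `{ J1 ∪ J2 : J1 ∈ S1, J2 ∈ S2 }`. -/
def pairUnions (S1 S2 : Set (Finset (Finset V))) : Set (Finset (Finset V)) :=
  {J | ∃ J1 ∈ S1, ∃ J2 ∈ S2, J = J1 ∪ J2}

/-- `N(P,φ)`: the number of agents of the profile `P` accepting `φ`. -/
def Ncount {n : ℕ} (P : Fin n → Finset (Finset V)) (φ : Finset V) : ℕ :=
  (Finset.univ.filter fun i => φ ∈ P i).card

/-- The majoritarian set `m(P) = {φ ∈ A : N(P,φ) > n/2}`. -/
def maj {n : ℕ} (A : Finset (Finset V)) (P : Fin n → Finset (Finset V)) :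
    Finset (Finset V) :=
  A.filter fun φ => n < 2 * Ncount P φ

end JA

namespace JA

variable {V : Type*} [Fintype V] [DecidableEq V]

open Classical in
/-- The greedy procedure of the ranked agenda rule: go through the list of agenda
formulas in order, adding a formula whenever it keeps the set `Γ`-consistent. -/
noncomputable def greedy (Γ : Finset V) :
    List (Finset V) → Finset (Finset V) → Finset (Finset V)
  | [], S => S
  | φ :: l, S =>
      if Consistent Γ (insert φ S) then greedy Γ l (insert φ S) else greedy Γ l S

/-- The ranked agenda rule `RA`: outputs all judgment sets obtained by running the greedy
procedure along some enumeration of `A` ordered by weakly decreasing majority support. -/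
noncomputable def RA (Γ : Finset V) (A : Finset (Finset V)) {n : ℕ}
    (P : Fin n → Finset (Finset V)) : Set (Finset (Finset V)) :=
  {J | ∃ l : List (Finset V), l.Nodup ∧ l.toFinset = A ∧
    l.Pairwise (fun φ ψ => Ncount P ψ ≤ Ncount P φ) ∧ J = greedy Γ l ∅}

end JA

namespace JA

variable {V : Type*} [Fintype V] [DecidableEq V]

lemma Consistent.mono {Γ : Finset V} {S T : Finset (Finset V)} (h : S ⊆ T)
    (hT : Consistent Γ T) : Consistent Γ S := by
  obtain ⟨v, hv, hall⟩ := hT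
  exact ⟨v, hv, fun φ hφ => hall φ (h hφ)⟩

lemma consistent_empty {Γ : Finset V} (h : Γ.Nonempty) : Consistent Γ (∅ : Finset (Finset V)) := by
  obtain ⟨v, hv⟩ := h
  exact ⟨v, hv, by simp⟩

lemma greedy_subset (Γ : Finset V) (l : List (Finset V)) (S : Finset (Finset V)) :
    S ⊆ greedy Γ l S := by
  induction l generalizing S with
  | nil => simp [greedy]
  | cons φ t ih =>
      rw [greedy]
      split
      · exact (Finset.subset_insert _ _).trans (ih _)
      · exact ih _

lemma greedy_subset_union (Γ : Finset V) (l : List (Finset V)) (S : Finset (Finset V)) :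
    greedy Γ l S ⊆ S ∪ l.toFinset := by
  induction l generalizing S with
  | nil => simp [greedy]
  | cons φ t ih =>
      rw [greedy]
      split
      · refine (ih _).trans ?_
        intro x hx
        simp only [Finset.mem_union, Finset.mem_insert, List.toFinset_cons] at hx ⊢
        tauto
      · refine (ih _).trans ?_
        intro x hx
        simp only [Finset.mem_union, Finset.mem_insert, List.toFinset_cons] at hx ⊢
        tauto

lemma greedy_consistent {Γ : Finset V} (l : List (Finset V)) {S : Finset (Finset V)}
    (hS : Consistent Γ S) : Consistent Γ (greedy Γ l S) := by
  induction l generalizing S with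
  | nil => simpa [greedy] using hS
  | cons φ t ih =>
      rw [greedy]
      split
      · exact ih ‹_›
      · exact ih hS

lemma greedy_append (Γ : Finset V) (u m : List (Finset V)) (S : Finset (Finset V)) :
    greedy Γ (u ++ m) S = greedy Γ m (greedy Γ u S) := by
  induction u generalizing S with
  | nil => simp [greedy]
  | cons φ t ih =>
      rw [List.cons_append, greedy, greedy]
      split
      · exact ih _
      · exact ih _

end JA
namespace JA
set_option linter.unusedSectionVars false

variable {V : Type*} [Fintype V] [DecidableEq V]

/-- Core lemma: greedy hits target `K` exactly, given negative certificates. -/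
lemma greedy_core {Γ : Finset V} {K : Finset (Finset V)} (hK : Consistent Γ K) :
    ∀ (l : List (Finset V)) (S : Finset (Finset V)), S ⊆ K →
      (∀ p φ s, l = p ++ φ :: s → φ ∉ K →
        ¬ Consistent Γ (insert φ (S ∪ K ∩ p.toFinset))) →
      greedy Γ l S = S ∪ K ∩ l.toFinset := by
  intro l
  induction l with
  | nil => intro S hS _; simp [greedy]
  | cons φ t ih =>
      intro S hS hneg
      by_cases hφ : φ ∈ K
      · have hcons : Consistent Γ (insert φ S) :=
          hK.mono (Finset.insert_subset hφ hS)
        rw [greedy, if_pos hcons]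
        rw [ih (insert φ S) (Finset.insert_subset hφ hS) ?_]
        · ext x
          simp only [Finset.mem_union, Finset.mem_insert, Finset.mem_inter,
            List.toFinset_cons]
          constructor
          · rintro ((h | h) | ⟨h1, h2⟩)
            · subst h; right; exact ⟨hφ, Or.inl rfl⟩
            · tauto
            · tauto
          · rintro (h | ⟨h1, (h2 | h2)⟩)
            · tauto
            · subst h2; tauto
            · tauto
        · intro p ψ s hps hψ
          have := hneg (φ :: p) ψ s (by simp [hps]) hψ
          intro hc
          apply this
          convert hc using 2
          ext x
          simp only [Finset.mem_union, Finset.mem_insert, Finset.mem_inter,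
            List.toFinset_cons]
          constructor
          · rintro (h | ⟨h1, (h2 | h2)⟩)
            · tauto
            · subst h2; tauto
            · tauto
          · rintro ((h | h) | ⟨h1, h2⟩)
            · subst h; right; exact ⟨hφ, Or.inl rfl⟩
            · tauto
            · tauto
      · have hnc : ¬ Consistent Γ (insert φ S) := by
          have := hneg [] φ t (by simp) hφ
          simpa using this
        rw [greedy, if_neg hnc]
        rw [ih S hS ?_]
        · ext x
          simp only [Finset.mem_union, Finset.mem_inter, List.toFinset_cons,
            Finset.mem_insert]
          constructor
          · rintro (h | ⟨h1, h2⟩) <;> tauto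
          · rintro (h | ⟨h1, (h2 | h2)⟩)
            · tauto
            · subst h2; exact absurd h1 hφ
            · tauto
        · intro p ψ s hps hψ
          have := hneg (φ :: p) ψ s (by simp [hps]) hψ
          intro hc
          apply this
          convert hc using 2
          ext x
          simp only [Finset.mem_union, Finset.mem_inter, List.toFinset_cons,
            Finset.mem_insert]
          constructor
          · rintro (h | ⟨h1, (h2 | h2)⟩)
            · tauto
            · subst h2; exact absurd h1 hφ
            · tauto
          · rintro (h | ⟨h1, h2⟩) <;> tauto

/-- In a nodup run, the part of the final output among the first `p` formulas
is exactly the greedy result of `p`. -/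
lemma greedy_prefix {Γ : Finset V} {l p s : List (Finset V)} (hl : l.Nodup)
    (hps : l = p ++ s) :
    greedy Γ l ∅ ∩ p.toFinset = greedy Γ p ∅ := by
  subst hps
  rw [greedy_append]
  have h1 : greedy Γ p (∅ : Finset (Finset V)) ⊆ p.toFinset := by
    simpa using greedy_subset_union Γ p ∅
  have h2 := greedy_subset Γ s (greedy Γ p ∅)
  have h3 := greedy_subset_union Γ s (greedy Γ p ∅)
  apply Finset.Subset.antisymm
  · intro x hx
    rcases Finset.mem_inter.1 hx with ⟨hx1, hx2⟩
    rcases Finset.mem_union.1 (h3 hx1) with h | h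
    · exact h
    · exfalso
      rcases List.nodup_append.1 hl with ⟨_, _, hd⟩
      exact hd _ (List.mem_toFinset.1 hx2) _ (List.mem_toFinset.1 h) rfl
  · intro x hx
    exact Finset.mem_inter.2 ⟨h2 hx, h1 hx⟩

/-- Negative certificate extracted from a greedy run. -/
lemma greedy_run_spec {Γ : Finset V} {l p s : List (Finset V)} {φ : Finset V}
    (hl : l.Nodup) (hps : l = p ++ φ :: s) (hφ : φ ∉ greedy Γ l ∅) :
    ¬ Consistent Γ (insert φ (greedy Γ l ∅ ∩ p.toFinset)) := by
  rw [greedy_prefix hl hps]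
  intro hc
  apply hφ
  subst hps
  rw [greedy_append, greedy, if_pos hc]
  exact greedy_subset _ _ _ (Finset.mem_insert_self _ _)

/-- Membership at a given position. -/
lemma greedy_mem_iff {Γ : Finset V} {l u r : List (Finset V)} {x : Finset V}
    (hur : l = u ++ x :: r) (hxu : x ∉ u) (hxr : x ∉ r) :
    (x ∈ greedy Γ l ∅ ↔ Consistent Γ (insert x (greedy Γ u ∅))) := by
  subst hur
  rw [greedy_append, greedy]
  split
  · simp only [iff_true, ‹_›]
    exact greedy_subset _ _ _ (Finset.mem_insert_self _ _)
  · simp only [iff_false, ‹_›]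
    intro hx
    rcases Finset.mem_union.1 (greedy_subset_union Γ r _ hx) with h | h
    · have : greedy Γ u (∅ : Finset (Finset V)) ⊆ u.toFinset := by
        simpa using greedy_subset_union Γ u ∅
      exact hxu (List.mem_toFinset.1 (this h))
    · exact hxr (List.mem_toFinset.1 h)

end JA
namespace JA
set_option linter.unusedSectionVars false

variable {V : Type*} [Fintype V] [DecidableEq V]

/-- The greedy run on a nodup enumeration of an agenda yields a complete consistent set. -/
lemma greedy_mem_CCJ {Γ : Finset V} {B : Finset (Finset V)} {l : List (Finset V)}
    (hΓ : Γ.Nonempty) (hB : IsAgenda B) (hnd : l.Nodup) (htf : l.toFinset = B) :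
    greedy Γ l ∅ ∈ CCJ Γ B := by
  set J := greedy Γ l ∅ with hJ
  have hsub : J ⊆ B := by
    rw [← htf]
    simpa using greedy_subset_union Γ l ∅
  have hcons : Consistent Γ J := greedy_consistent l (consistent_empty hΓ)
  refine ⟨hsub, ?_, hcons⟩
  intro φ hφ
  by_contra hcon
  push_neg at hcon
  obtain ⟨h1, h2⟩ := hcon
  have hφl : φ ∈ l := by rw [← List.mem_toFinset, htf]; exact hφ
  have hφcl : φᶜ ∈ l := by rw [← List.mem_toFinset, htf]; exact hB.1 φ hφ
  obtain ⟨p1, s1, hd1⟩ := List.append_of_mem hφl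
  obtain ⟨p2, s2, hd2⟩ := List.append_of_mem hφcl
  have c1 := greedy_run_spec hnd hd1 h1
  have c2 := greedy_run_spec hnd hd2 h2
  obtain ⟨v, hv, hall⟩ := hcons
  by_cases hvφ : v ∈ φ
  · apply c1
    refine ⟨v, hv, fun ψ hψ => ?_⟩
    rcases Finset.mem_insert.1 hψ with h | h
    · subst h; exact hvφ
    · exact hall ψ (Finset.mem_inter.1 h).1
  · apply c2
    refine ⟨v, hv, fun ψ hψ => ?_⟩
    rcases Finset.mem_insert.1 hψ with h | h
    · subst h; exact Finset.mem_compl.2 hvφ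
    · exact hall ψ (Finset.mem_inter.1 h).1

/-- Swapping two adjacent formulas does not change the greedy output, provided the
verdict on the first one is the same in both runs. -/
lemma greedy_swap {Γ : Finset V} {u w : List (Finset V)} {x y : Finset V}
    (hnd : (u ++ x :: y :: w).Nodup)
    (hx : x ∈ greedy Γ (u ++ x :: y :: w) ∅ ↔ x ∈ greedy Γ (u ++ y :: x :: w) ∅) :
    greedy Γ (u ++ x :: y :: w) ∅ = greedy Γ (u ++ y :: x :: w) ∅ := by
  have hxu : x ∉ u := by
    intro h; rcases List.nodup_append.1 hnd with ⟨_, _, hd⟩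
    exact hd _ h _ (by simp) rfl
  have hxw : x ∉ w := by
    have := hnd.of_append_right
    simp only [List.nodup_cons, List.mem_cons] at this
    exact fun h => this.1 (Or.inr h)
  have hxy : x ≠ y := by
    have := hnd.of_append_right
    simp only [List.nodup_cons, List.mem_cons] at this
    exact fun h => this.1 (Or.inl h)
  rw [greedy_append, greedy_append] at *
  set S := greedy Γ u ∅ with hS
  have hmem1 : x ∈ greedy Γ (x :: y :: w) S ↔ Consistent Γ (insert x S) := by
    have := greedy_mem_iff (Γ := Γ) (l := u ++ x :: y :: w) (u := u) (r := y :: w)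
      rfl hxu (by simp [hxy, hxw])
    rwa [greedy_append] at this
  have hmem2 : x ∈ greedy Γ (y :: x :: w) S ↔
      Consistent Γ (insert x (greedy Γ [y] S)) := by
    have := greedy_mem_iff (Γ := Γ) (l := (u ++ [y]) ++ x :: w) (u := u ++ [y]) (r := w)
      (by simp) (by simpa [hxu] using hxy) hxw
    rw [greedy_append, greedy_append] at this
    rw [show (y :: x :: w) = [y] ++ x :: w from rfl, greedy_append]
    exact this
  by_cases cy : Consistent Γ (insert y S)
  · have hgy : greedy Γ [y] S = insert y S := by simp [greedy, cy]
    rw [hmem1, hmem2, hgy] at hx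
    by_cases cxy : Consistent Γ (insert x (insert y S))
    · have cx : Consistent Γ (insert x S) :=
        cxy.mono (Finset.insert_subset_insert _ (Finset.subset_insert _ _))
      have cyx : Consistent Γ (insert y (insert x S)) := by
        rwa [Finset.insert_comm]
      rw [greedy, if_pos cx, greedy, if_pos cyx, greedy, if_pos cy, greedy,
        if_pos cxy, Finset.insert_comm]
    · have cx : ¬ Consistent Γ (insert x S) := fun h => cxy (hx.1 h)
      have cyx : ¬ Consistent Γ (insert y (insert x S)) := by
        rwa [Finset.insert_comm]
      rw [greedy, if_neg cx, greedy, if_pos cy, greedy, if_pos cy, greedy, if_neg cxy]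
  · have cyx : ¬ Consistent Γ (insert y (insert x S)) := fun h =>
      cy (h.mono (Finset.insert_subset_insert _ (Finset.subset_insert _ _)))
    by_cases cx : Consistent Γ (insert x S)
    · rw [greedy, if_pos cx, greedy, if_neg cyx, greedy, if_neg cy, greedy, if_pos cx]
    · rw [greedy, if_neg cx, greedy, if_neg cy, greedy, if_neg cy, greedy, if_neg cx]

end JA
namespace JA
set_option linter.unusedSectionVars false

variable {α : Type*} [DecidableEq α]

/-- Merge two lists by weakly decreasing key `f`. -/
def mrg (f : α → ℕ) : List α → List α → List α
  | [], r => r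
  | a :: l, [] => a :: l
  | a :: l, b :: r =>
      if f b ≤ f a then a :: mrg f l (b :: r) else b :: mrg f (a :: l) r
  termination_by l r => l.length + r.length

lemma mrg_perm (f : α → ℕ) : ∀ l r : List α, List.Perm (mrg f l r) (l ++ r)
  | [], r => by simp [mrg]
  | a :: l, [] => by simp [mrg]
  | a :: l, b :: r => by
      rw [mrg]
      split
      · exact ((mrg_perm f l (b :: r)).cons a)
      · refine ((mrg_perm f (a :: l) r).cons b).trans ?_
        refine ((List.perm_middle).symm.trans ?_)
        exact List.Perm.refl _
  termination_by l r => l.length + r.length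

lemma mrg_sorted (f : α → ℕ) : ∀ l r : List α,
    l.Pairwise (fun a b => f b ≤ f a) → r.Pairwise (fun a b => f b ≤ f a) →
    (mrg f l r).Pairwise (fun a b => f b ≤ f a)
  | [], r => fun _ hr => by simpa [mrg] using hr
  | a :: l, [] => fun hl _ => by simpa [mrg] using hl
  | a :: l, b :: r => fun hl hr => by
      rw [mrg]
      rcases List.pairwise_cons.1 hl with ⟨ha, hl'⟩
      rcases List.pairwise_cons.1 hr with ⟨hb, hr'⟩
      split
      · rename_i hba
        refine List.pairwise_cons.2 ⟨?_, mrg_sorted f l (b :: r) hl' hr⟩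
        intro c hc
        rcases List.mem_append.1 ((mrg_perm f l (b :: r)).mem_iff.1 hc) with h | h
        · exact ha c (by simpa using h)
        · rcases List.mem_cons.1 h with h | h
          · subst h; exact hba
          · exact (hb c h).trans hba
      · rename_i hba
        push_neg at hba
        refine List.pairwise_cons.2 ⟨?_, mrg_sorted f (a :: l) r hl hr'⟩
        intro c hc
        rcases List.mem_append.1 ((mrg_perm f (a :: l) r).mem_iff.1 hc) with h | h
        · rcases List.mem_cons.1 h with h | h
          · subst h; exact hba.le
          · exact (ha c h).trans hba.le
        · exact hb c h
  termination_by l r => l.length + r.length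

lemma mrg_filter_pos (f : α → ℕ) (p : α → Prop) [DecidablePred p] :
    ∀ l r : List α, (∀ a ∈ l, p a) → (∀ a ∈ r, ¬ p a) →
      (mrg f l r).filter (fun a => p a) = l
  | [], r => fun _ hr => by
      rw [mrg, List.filter_eq_nil_iff.2]
      intro a ha
      simpa using hr a ha
  | a :: l, [] => fun hl _ => by
      rw [mrg, List.filter_eq_self.2]
      intro a ha
      simpa using hl a ha
  | a :: l, b :: r => fun hl hr => by
      rw [mrg]
      split
      · rw [List.filter_cons_of_pos (by simpa using hl a (by simp)),
          mrg_filter_pos f p l (b :: r) (fun c hc => hl c (by simp [hc])) hr]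
      · rw [List.filter_cons_of_neg (by simpa using hr b (by simp)),
          mrg_filter_pos f p (a :: l) r hl (fun c hc => hr c (by simp [hc]))]
  termination_by l r => l.length + r.length

lemma mrg_filter_neg (f : α → ℕ) (p : α → Prop) [DecidablePred p] :
    ∀ l r : List α, (∀ a ∈ l, p a) → (∀ a ∈ r, ¬ p a) →
      (mrg f l r).filter (fun a => ¬ p a) = r
  | [], r => fun _ hr => by
      rw [mrg, List.filter_eq_self.2]
      intro a ha
      simpa using hr a ha
  | a :: l, [] => fun hl _ => by
      rw [mrg, List.filter_eq_nil_iff.2]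
      intro a ha
      simpa using hl a ha
  | a :: l, b :: r => fun hl hr => by
      rw [mrg]
      split
      · rw [List.filter_cons_of_neg (by simpa using hl a (by simp)),
          mrg_filter_neg f p l (b :: r) (fun c hc => hl c (by simp [hc])) hr]
      · rw [List.filter_cons_of_pos (by simpa using hr b (by simp)),
          mrg_filter_neg f p (a :: l) r hl (fun c hc => hr c (by simp [hc]))]
  termination_by l r => l.length + r.length

lemma filter_erase_of_pos (p : α → Prop) [DecidablePred p] (a : α) (hp : p a) :
    ∀ l : List α, (l.erase a).filter (fun x => p x) = (l.filter (fun x => p x)).erase a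
  | [] => by simp
  | b :: l => by
      by_cases hba : b = a
      · subst hba
        rw [List.erase_cons_head, List.filter_cons_of_pos (by simpa using hp),
          List.erase_cons_head]
      · rw [List.erase_cons_tail (by simpa using hba)]
        by_cases hpb : p b
        · rw [List.filter_cons_of_pos (by simpa using hpb),
            List.filter_cons_of_pos (by simpa using hpb),
            List.erase_cons_tail (by simpa using hba),
            filter_erase_of_pos p a hp l]
        · rw [List.filter_cons_of_neg (by simpa using hpb),
            List.filter_cons_of_neg (by simpa using hpb),
            filter_erase_of_pos p a hp l]

lemma filter_erase_of_neg (p : α → Prop) [DecidablePred p] (a : α) (hp : ¬ p a) :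
    ∀ l : List α, (l.erase a).filter (fun x => p x) = l.filter (fun x => p x)
  | [] => by simp
  | b :: l => by
      by_cases hba : b = a
      · subst hba
        rw [List.erase_cons_head, List.filter_cons_of_neg (by simpa using hp)]
      · rw [List.erase_cons_tail (by simpa using hba)]
        by_cases hpb : p b
        · rw [List.filter_cons_of_pos (by simpa using hpb),
            List.filter_cons_of_pos (by simpa using hpb),
            filter_erase_of_neg p a hp l]
        · rw [List.filter_cons_of_neg (by simpa using hpb),
            List.filter_cons_of_neg (by simpa using hpb),
            filter_erase_of_neg p a hp l]

end JA
namespace JA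
set_option linter.unusedSectionVars false

section sortedhelp
variable {α : Type*} [DecidableEq α] {f : α → ℕ}

lemma sorted_front {u t : List α} {a : α}
    (h : (u ++ t).Pairwise (fun x y => f y ≤ f x)) (ha : a ∈ t)
    (hmax : ∀ b ∈ t, f b ≤ f a) :
    (u ++ a :: t.erase a).Pairwise (fun x y => f y ≤ f x) := by
  rw [List.pairwise_append] at h ⊢
  obtain ⟨hu, ht, hcross⟩ := h
  refine ⟨hu, ?_, ?_⟩
  · rw [List.pairwise_cons]
    refine ⟨fun c hc => hmax c ((List.erase_sublist (a := a) (l := t)) |>.mem hc), ?_⟩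
    exact ht.sublist ((List.erase_sublist (a := a) (l := t)))
  · intro x hx y hy
    rcases List.mem_cons.1 hy with h | h
    · subst h; exact hcross x hx _ ha
    · exact hcross x hx y ((List.erase_sublist (a := a) (l := t)) |>.mem h)

lemma sorted_mid {u s : List α} {a b : α}
    (h : (u ++ b :: s).Pairwise (fun x y => f y ≤ f x)) (ha : a ∈ s)
    (hmax : ∀ c ∈ s, f c ≤ f a) (hba : f b ≤ f a) :
    (u ++ b :: a :: s.erase a).Pairwise (fun x y => f y ≤ f x) ∧
    (u ++ a :: b :: s.erase a).Pairwise (fun x y => f y ≤ f x) := by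
  rw [List.pairwise_append] at h
  obtain ⟨hu, hbs, hcr⟩ := h
  rw [List.pairwise_cons] at hbs
  obtain ⟨hb, hs⟩ := hbs
  have hab : f a ≤ f b := hb a ha
  have hrest : List.Pairwise (fun x y => f y ≤ f x) (s.erase a) :=
    hs.sublist ((List.erase_sublist (a := a) (l := s)))
  have hemem : ∀ c ∈ s.erase a, c ∈ s := fun c hc => ((List.erase_sublist (a := a) (l := s))).mem hc
  constructor
  · rw [List.pairwise_append]
    refine ⟨hu, ?_, ?_⟩
    · rw [List.pairwise_cons]
      refine ⟨fun c hc => ?_, ?_⟩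
      · rcases List.mem_cons.1 hc with h | h
        · subst h; exact hab
        · exact hb c (hemem c h)
      · rw [List.pairwise_cons]
        exact ⟨fun c hc => hmax c (hemem c hc), hrest⟩
    · intro x hx y hy
      rcases List.mem_cons.1 hy with h | h
      · subst h; exact hcr x hx _ (by simp)
      · rcases List.mem_cons.1 h with h' | h'
        · subst h'; exact hcr x hx _ (by simp [ha])
        · exact hcr x hx y (by simp [hemem y h'])
  · rw [List.pairwise_append]
    refine ⟨hu, ?_, ?_⟩
    · rw [List.pairwise_cons]
      refine ⟨fun c hc => ?_, ?_⟩
      · rcases List.mem_cons.1 hc with h | h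
        · subst h; exact hba
        · exact hmax c (hemem c h)
      · rw [List.pairwise_cons]
        exact ⟨fun c hc => hb c (hemem c hc), hrest⟩
    · intro x hx y hy
      rcases List.mem_cons.1 hy with h | h
      · subst h; exact hcr x hx _ (by simp [ha])
      · rcases List.mem_cons.1 h with h' | h'
        · subst h'; exact hcr x hx _ (by simp)
        · exact hcr x hx y (by simp [hemem y h'])
end sortedhelp

variable {V : Type*} [Fintype V] [DecidableEq V]

/-- Bubble an element of maximal weight to the front of the tail, without changing
the greedy output. -/
lemma greedy_bubble {Γ : Finset V} {A1 A2 F : Finset (Finset V)} {f : Finset V → ℕ}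
    (hF : ∀ m : List (Finset V), m.Nodup → m.toFinset = A2 →
      m.Pairwise (fun a b => f b ≤ f a) → greedy Γ m ∅ ∩ A1 = F) {a : Finset V} :
    ∀ (t u : List (Finset V)), a ∈ t → (u ++ t).Nodup →
      (u ++ t).Pairwise (fun x y => f y ≤ f x) → (u ++ t).toFinset = A2 →
      (∀ b ∈ t, f b ≤ f a) →
      (a ∈ A1 ∨ ∀ b ∈ t.takeWhile (fun x => x ≠ a), b ∈ A1) →
      greedy Γ (u ++ t) ∅ = greedy Γ (u ++ a :: t.erase a) ∅
  | [], u => by simp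
  | b :: s, u => fun hat hnd hsort htf hmax hpre => by
      by_cases hba : b = a
      · subst hba
        rw [List.erase_cons_head]
      · have has : a ∈ s := by
          rcases List.mem_cons.1 hat with h | h
          · exact absurd h.symm hba
          · exact h
        have hstep := greedy_bubble hF s (u ++ [b]) has (by simpa using hnd)
          (by simpa using hsort) (by simpa using htf)
          (fun c hc => hmax c (by simp [hc]))
          (by
            rcases hpre with h | h
            · exact Or.inl h
            · refine Or.inr fun c hc => h c ?_
              rw [List.takeWhile_cons_of_pos (by simpa using hba)]
              exact List.mem_cons_of_mem _ hc)
        have hfba : f b ≤ f a := hmax b (by simp)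
        have hsorted2 := sorted_mid (u := u) (s := s) (a := a) (b := b)
          hsort has (fun c hc => hmax c (by simp [hc])) hfba
        -- permutations
        have hpermA : List.Perm (b :: a :: s.erase a) (b :: s) :=
          List.Perm.cons b (List.perm_cons_erase has).symm
        have hpermB : List.Perm (a :: b :: s.erase a) (b :: s) :=
          List.Perm.trans (List.Perm.swap b a _) hpermA
        have hperm1 : List.Perm (u ++ b :: a :: s.erase a) (u ++ b :: s) :=
          List.Perm.append_left _ hpermA
        have hperm2 : List.Perm (u ++ a :: b :: s.erase a) (u ++ b :: s) :=
          List.Perm.append_left _ hpermB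
        have hnd1 : (u ++ b :: a :: s.erase a).Nodup := hperm1.symm.nodup hnd
        have hnd2 : (u ++ a :: b :: s.erase a).Nodup := hperm2.symm.nodup hnd
        have htf1 : (u ++ b :: a :: s.erase a).toFinset = A2 := by
          ext x; rw [← htf]; simp only [List.mem_toFinset]; exact hperm1.mem_iff
        have htf2 : (u ++ a :: b :: s.erase a).toFinset = A2 := by
          ext x; rw [← htf]; simp only [List.mem_toFinset]; exact hperm2.mem_iff
        have key : greedy Γ (u ++ b :: a :: s.erase a) ∅
            = greedy Γ (u ++ a :: b :: s.erase a) ∅ := by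
          rcases hpre with hmem | hpre'
          · -- a ∈ A1 : swap with x := a on the reversed pair
            have e1 := hF _ hnd2 htf2 hsorted2.2
            have e2 := hF _ hnd1 htf1 hsorted2.1
            refine (greedy_swap (x := a) (y := b) (u := u) (w := s.erase a) hnd2 ?_).symm
            constructor
            · intro h
              have : a ∈ F := by
                rw [← e1]; exact Finset.mem_inter.2 ⟨h, hmem⟩
              rw [← e2] at this
              exact (Finset.mem_inter.1 this).1
            · intro h
              have : a ∈ F := by
                rw [← e2]; exact Finset.mem_inter.2 ⟨h, hmem⟩
              rw [← e1] at this
              exact (Finset.mem_inter.1 this).1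
          · -- b ∈ A1
            have hbA1 : b ∈ A1 := by
              apply hpre' b
              rw [List.takeWhile_cons_of_pos (by simpa using hba)]
              exact List.mem_cons_self
            have e1 := hF _ hnd1 htf1 hsorted2.1
            have e2 := hF _ hnd2 htf2 hsorted2.2
            refine greedy_swap (x := b) (y := a) (u := u) (w := s.erase a) hnd1 ?_
            constructor
            · intro h
              have : b ∈ F := by
                rw [← e1]; exact Finset.mem_inter.2 ⟨h, hbA1⟩
              rw [← e2] at this
              exact (Finset.mem_inter.1 this).1
            · intro h
              have : b ∈ F := by
                rw [← e2]; exact Finset.mem_inter.2 ⟨h, hbA1⟩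
              rw [← e1] at this
              exact (Finset.mem_inter.1 this).1
        rw [List.erase_cons_tail (by simpa using hba)]
        calc greedy Γ (u ++ b :: s) ∅
            = greedy Γ ((u ++ [b]) ++ a :: s.erase a) ∅ := by
              rw [show u ++ b :: s = (u ++ [b]) ++ s by simp]
              exact hstep
          _ = greedy Γ (u ++ b :: a :: s.erase a) ∅ := by
              rw [List.append_assoc, List.singleton_append]
          _ = greedy Γ (u ++ a :: b :: s.erase a) ∅ := key
  termination_by t u => t.length

end JA
namespace JA
set_option linter.unusedSectionVars false

variable {V : Type*} [Fintype V] [DecidableEq V]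

/-- Two sorted enumerations of `A2` that order the non-`A1` formulas identically
have the same greedy output, assuming the `A1`-verdicts are forced. -/
lemma greedy_transform {Γ : Finset V} {A1 A2 F : Finset (Finset V)} {f : Finset V → ℕ}
    (hF : ∀ m : List (Finset V), m.Nodup → m.toFinset = A2 →
      m.Pairwise (fun a b => f b ≤ f a) → greedy Γ m ∅ ∩ A1 = F) :
    ∀ (t' t u : List (Finset V)),
      (u ++ t).Nodup → (u ++ t').Nodup →
      (u ++ t).Pairwise (fun x y => f y ≤ f x) → (u ++ t').Pairwise (fun x y => f y ≤ f x) →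
      (u ++ t).toFinset = A2 → (u ++ t').toFinset = A2 →
      t.toFinset = t'.toFinset →
      t.filter (fun x => x ∉ A1) = t'.filter (fun x => x ∉ A1) →
      greedy Γ (u ++ t) ∅ = greedy Γ (u ++ t') ∅
  | [], t, u => fun _ _ _ _ _ _ htt _ => by
      have : t = [] := by
        rw [← List.toFinset_eq_empty_iff]
        simpa using htt
      rw [this]
  | a :: s', t, u => fun hnd hnd' hsort hsort' htf htf' htt hfil => by
      have hndt : t.Nodup := hnd.of_append_right
      have hndt' : (a :: s').Nodup := hnd'.of_append_right
      have hasnot : a ∉ s' := (List.nodup_cons.1 hndt').1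
      have hat : a ∈ t := by
        rw [← List.mem_toFinset, htt]; simp
      have hmax : ∀ b ∈ t, f b ≤ f a := by
        intro b hb
        rw [← List.mem_toFinset, htt, List.toFinset_cons, Finset.mem_insert] at hb
        rcases hb with h | h
        · subst h; exact le_refl _
        · have := (List.pairwise_append.1 hsort').2.1
          exact (List.pairwise_cons.1 this).1 b (List.mem_toFinset.1 h)
      have hpre : a ∈ A1 ∨ ∀ b ∈ t.takeWhile (fun x => x ≠ a), b ∈ A1 := by
        by_cases haA : a ∈ A1
        · exact Or.inl haA
        · refine Or.inr fun b hb => ?_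
          by_contra hbA
          have hba : b ≠ a := by simpa using List.mem_takeWhile_imp hb
          have hq : (t.takeWhile (fun x => x ≠ a)).filter (fun x => x ∉ A1) ≠ [] := by
            intro h
            have := List.filter_eq_nil_iff.1 h b hb
            simp [hbA] at this
          obtain ⟨c, w', hw⟩ := List.exists_cons_of_ne_nil hq
          have hfil2 : t.filter (fun x => x ∉ A1) =
              (t.takeWhile (fun x => x ≠ a)).filter (fun x => x ∉ A1) ++
              (t.dropWhile (fun x => x ≠ a)).filter (fun x => x ∉ A1) := by
            rw [← List.filter_append, List.takeWhile_append_dropWhile]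
          have : a :: s'.filter (fun x => x ∉ A1) = c :: (w' ++
              (t.dropWhile (fun x => x ≠ a)).filter (fun x => x ∉ A1)) := by
            rw [← List.filter_cons_of_pos (by simpa using haA), ← hfil, hfil2, hw]
            simp
          have hca : c = a := (List.cons.injEq _ _ _ _ ▸ this).1.symm
          have hcmem : c ∈ (t.takeWhile (fun x => x ≠ a)) := by
            have : c ∈ (t.takeWhile (fun x => x ≠ a)).filter (fun x => x ∉ A1) := by
              rw [hw]; simp
            exact List.mem_of_mem_filter this
          have := List.mem_takeWhile_imp hcmem
          simp [hca] at this
      have hbub := greedy_bubble hF t u hat hnd hsort htf hmax hpre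
      have hperm : List.Perm (u ++ a :: t.erase a) (u ++ t) :=
        List.Perm.append_left _ (List.perm_cons_erase hat).symm
      have hrec := greedy_transform hF s' (t.erase a) (u ++ [a])
        (by
          have : (u ++ a :: t.erase a).Nodup := hperm.symm.nodup hnd
          simpa using this)
        (by simpa using hnd')
        (by
          have := sorted_front (f := f) hsort hat hmax
          simpa using this)
        (by simpa using hsort')
        (by
          rw [show (u ++ [a]) ++ t.erase a = u ++ a :: t.erase a by simp, ← htf]
          ext x
          simp only [List.mem_toFinset]
          exact hperm.mem_iff)
        (by simpa using htf')
        (by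
          ext x
          simp only [List.mem_toFinset, hndt.mem_erase_iff]
          constructor
          · rintro ⟨hxa, hx⟩
            have : x ∈ a :: s' := by
              rw [← List.mem_toFinset, ← htt]; exact List.mem_toFinset.2 hx
            rcases List.mem_cons.1 this with h | h
            · exact absurd h hxa
            · exact h
          · intro hx
            have hxa : x ≠ a := fun h => hasnot (h ▸ hx)
            refine ⟨hxa, ?_⟩
            rw [← List.mem_toFinset, htt]
            simp [hx])
        (by
          by_cases haA : a ∈ A1
          · rw [filter_erase_of_neg (fun x => x ∉ A1) a (by simp [haA]) t, hfil,
              List.filter_cons_of_neg (by simpa using haA)]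
          · rw [filter_erase_of_pos (fun x => x ∉ A1) a (by simp [haA]) t, hfil,
              List.filter_cons_of_pos (by simpa using haA), List.erase_cons_head])
      rw [hbub, show u ++ a :: t.erase a = (u ++ [a]) ++ t.erase a by simp, hrec]
      simp
  termination_by t' => t'.length

end JA
namespace JA
set_option linter.unusedSectionVars false

lemma pairwise_congr_mem {α : Type*} {R S : α → α → Prop} :
    ∀ l : List α, (∀ x ∈ l, ∀ y ∈ l, R x y ↔ S x y) →
      (l.Pairwise R ↔ l.Pairwise S)
  | [], _ => by simp
  | a :: l, h => by
      rw [List.pairwise_cons, List.pairwise_cons,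
        pairwise_congr_mem l (fun x hx y hy => h x (by simp [hx]) y (by simp [hy]))]
      constructor
      · rintro ⟨h1, h2⟩
        exact ⟨fun y hy => (h a (by simp) y (by simp [hy])).1 (h1 y hy), h2⟩
      · rintro ⟨h1, h2⟩
        exact ⟨fun y hy => (h a (by simp) y (by simp [hy])).2 (h1 y hy), h2⟩

variable {V : Type*} [Fintype V] [DecidableEq V]

lemma Ncount_restrict {n : ℕ} (P : Fin n → Finset (Finset V)) (B : Finset (Finset V))
    {φ : Finset V} (hφ : φ ∈ B) : Ncount (restrict P B) φ = Ncount P φ := by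
  unfold Ncount restrict
  congr 1
  apply Finset.filter_congr
  intro i _
  simp [Finset.mem_inter, hφ]

lemma sorted_restrict_iff {n : ℕ} {P : Fin n → Finset (Finset V)} {B : Finset (Finset V)}
    {l : List (Finset V)} (h : ∀ x ∈ l, x ∈ B) :
    l.Pairwise (fun φ ψ => Ncount (restrict P B) ψ ≤ Ncount (restrict P B) φ) ↔
    l.Pairwise (fun φ ψ => Ncount P ψ ≤ Ncount P φ) := by
  apply pairwise_congr_mem
  intro x hx y hy
  rw [Ncount_restrict P B (h x hx), Ncount_restrict P B (h y hy)]

/-- The splitting lemma: on any admissible enumeration of `A`, the greedy output is the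
union of the greedy outputs of the induced enumerations of `A1` and `A2`. -/
lemma greedy_split {Γ : Finset V} {A A1 A2 : Finset (Finset V)} {n : ℕ}
    {P : Fin n → Finset (Finset V)}
    (hΓ : Γ.Nonempty) (hIOD : IOD Γ A A1 A2)
    (hcomp : ∀ J1 ∈ RA Γ A1 (restrict P A1), ∀ J2 ∈ RA Γ A2 (restrict P A2),
      J1 ∩ A2 = J2 ∩ A1)
    {l : List (Finset V)} (hnd : l.Nodup) (htf : l.toFinset = A)
    (hsort : l.Pairwise (fun φ ψ => Ncount P ψ ≤ Ncount P φ)) :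
    greedy Γ (l.filter (fun x => x ∈ A1)) ∅ ∈ RA Γ A1 (restrict P A1) ∧
    greedy Γ (l.filter (fun x => x ∈ A2)) ∅ ∈ RA Γ A2 (restrict P A2) ∧
    greedy Γ l ∅ =
      greedy Γ (l.filter (fun x => x ∈ A1)) ∅ ∪ greedy Γ (l.filter (fun x => x ∈ A2)) ∅ := by
  obtain ⟨hun, hag1, hag2, hiod⟩ := hIOD
  have hA1A : A1 ⊆ A := hun ▸ Finset.subset_union_left
  have hA2A : A2 ⊆ A := hun ▸ Finset.subset_union_right
  set l1 := l.filter (fun x => x ∈ A1) with hl1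
  set l2 := l.filter (fun x => x ∈ A2) with hl2
  have hmem1 : ∀ x ∈ l1, x ∈ A1 := fun x hx => by
    have := List.of_mem_filter hx; simpa using this
  have hmem2 : ∀ x ∈ l2, x ∈ A2 := fun x hx => by
    have := List.of_mem_filter hx; simpa using this
  have hnd1 : l1.Nodup := hnd.filter _
  have hnd2 : l2.Nodup := hnd.filter _
  have htf1 : l1.toFinset = A1 := by
    ext x
    simp only [hl1, List.mem_toFinset, List.mem_filter, decide_eq_true_eq]
    constructor
    · rintro ⟨_, h⟩; exact h
    · intro h
      exact ⟨by rw [← List.mem_toFinset, htf]; exact hA1A h, h⟩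
  have htf2 : l2.toFinset = A2 := by
    ext x
    simp only [hl2, List.mem_toFinset, List.mem_filter, decide_eq_true_eq]
    constructor
    · rintro ⟨_, h⟩; exact h
    · intro h
      exact ⟨by rw [← List.mem_toFinset, htf]; exact hA2A h, h⟩
  have hsort1 : l1.Pairwise (fun φ ψ => Ncount (restrict P A1) ψ ≤ Ncount (restrict P A1) φ) :=
    (sorted_restrict_iff hmem1).2 (hsort.sublist (List.filter_sublist (l := l)))
  have hsort2 : l2.Pairwise (fun φ ψ => Ncount (restrict P A2) ψ ≤ Ncount (restrict P A2) φ) :=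
    (sorted_restrict_iff hmem2).2 (hsort.sublist (List.filter_sublist (l := l)))
  have hRA1 : greedy Γ l1 ∅ ∈ RA Γ A1 (restrict P A1) := ⟨l1, hnd1, htf1, hsort1, rfl⟩
  have hRA2 : greedy Γ l2 ∅ ∈ RA Γ A2 (restrict P A2) := ⟨l2, hnd2, htf2, hsort2, rfl⟩
  refine ⟨hRA1, hRA2, ?_⟩
  have hCCJ1 : greedy Γ l1 ∅ ∈ CCJ Γ A1 := greedy_mem_CCJ hΓ hag1 hnd1 htf1
  have hCCJ2 : greedy Γ l2 ∅ ∈ CCJ Γ A2 := greedy_mem_CCJ hΓ hag2 hnd2 htf2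
  have hcompat := hcomp _ hRA1 _ hRA2
  have hKCCJ : greedy Γ l1 ∅ ∪ greedy Γ l2 ∅ ∈ CCJ Γ A :=
    hiod _ hCCJ1 _ hCCJ2 hcompat
  set K := greedy Γ l1 ∅ ∪ greedy Γ l2 ∅ with hK
  have hKsub : K ⊆ A := hKCCJ.1
  have hKcons : Consistent Γ K := hKCCJ.2.2
  have := greedy_core hKcons l ∅ (Finset.empty_subset _) ?_
  · rw [this, htf]
    rw [Finset.empty_union, Finset.inter_eq_left.2 hKsub]
  · intro p φ s hps hφK
    have hφl : φ ∈ l := by rw [hps]; simp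
    have hφA : φ ∈ A := by rw [← htf]; exact List.mem_toFinset.2 hφl
    have hφ12 : φ ∈ A1 ∨ φ ∈ A2 := by
      rw [← Finset.mem_union, hun]; exact hφA
    rcases hφ12 with hφ1 | hφ2
    · have hdec : l1 = p.filter (fun x => x ∈ A1) ++ φ :: s.filter (fun x => x ∈ A1) := by
        rw [hl1, hps, List.filter_append, List.filter_cons_of_pos (by simpa using hφ1)]
      have hφJ : φ ∉ greedy Γ l1 ∅ := fun h => hφK (Finset.mem_union_left _ h)
      have hcert := greedy_run_spec hnd1 hdec hφJ
      intro hc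
      apply hcert
      refine hc.mono ?_
      apply Finset.insert_subset_insert
      intro x hx
      rcases Finset.mem_inter.1 hx with ⟨hx1, hx2⟩
      refine Finset.mem_union_right _ (Finset.mem_inter.2 ⟨Finset.mem_union_left _ hx1, ?_⟩)
      rw [List.mem_toFinset] at hx2 ⊢
      exact List.mem_of_mem_filter hx2
    · have hdec : l2 = p.filter (fun x => x ∈ A2) ++ φ :: s.filter (fun x => x ∈ A2) := by
        rw [hl2, hps, List.filter_append, List.filter_cons_of_pos (by simpa using hφ2)]
      have hφJ : φ ∉ greedy Γ l2 ∅ := fun h => hφK (Finset.mem_union_right _ h)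
      have hcert := greedy_run_spec hnd2 hdec hφJ
      intro hc
      apply hcert
      refine hc.mono ?_
      apply Finset.insert_subset_insert
      intro x hx
      rcases Finset.mem_inter.1 hx with ⟨hx1, hx2⟩
      refine Finset.mem_union_right _ (Finset.mem_inter.2 ⟨Finset.mem_union_right _ hx1, ?_⟩)
      rw [List.mem_toFinset] at hx2 ⊢
      exact List.mem_of_mem_filter hx2

end JA
namespace JA

/-- The ranked agenda rule satisfies overlapping agenda separability. -/
theorem ra_oas {V : Type*} [Fintype V] [DecidableEq V] [Nonempty V] :
    ∀ (Γ : Finset V) (A A1 A2 : Finset (Finset V)) (n : ℕ) (P : Fin n → Finset (Finset V)),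
      Γ.Nonempty → IsAgenda A → IOD Γ A A1 A2 → IsProfile Γ A P →
      (∀ J1 ∈ RA Γ A1 (restrict P A1), ∀ J2 ∈ RA Γ A2 (restrict P A2),
        J1 ∩ A2 = J2 ∩ A1) →
      RA Γ A P = pairUnions (RA Γ A1 (restrict P A1)) (RA Γ A2 (restrict P A2)) := by
  intro Γ A A1 A2 n P hΓ hA hIOD hP hcomp
  obtain ⟨hun, hag1, hag2, hiod⟩ := hIOD
  have hIOD' : IOD Γ A A1 A2 := ⟨hun, hag1, hag2, hiod⟩
  have hA1A : A1 ⊆ A := hun ▸ Finset.subset_union_left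
  have hA2A : A2 ⊆ A := hun ▸ Finset.subset_union_right
  ext J
  constructor
  · rintro ⟨l, hnd, htf, hsort, rfl⟩
    obtain ⟨h1, h2, heq⟩ := greedy_split hΓ hIOD' hcomp hnd htf hsort
    exact ⟨_, h1, _, h2, heq⟩
  · rintro ⟨J1, ⟨m1, hnd1, htf1, hsort1, rfl⟩, J2, ⟨m2, hnd2, htf2, hsort2, rfl⟩, rfl⟩
    set f : Finset V → ℕ := Ncount P with hf
    have hmemm1 : ∀ x ∈ m1, x ∈ A1 := fun x hx => htf1 ▸ List.mem_toFinset.2 hx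
    have hmemm2 : ∀ x ∈ m2, x ∈ A2 := fun x hx => htf2 ▸ List.mem_toFinset.2 hx
    have hs1f : m1.Pairwise (fun φ ψ => f ψ ≤ f φ) := (sorted_restrict_iff hmemm1).1 hsort1
    have hs2f : m2.Pairwise (fun φ ψ => f ψ ≤ f φ) := (sorted_restrict_iff hmemm2).1 hsort2
    set l2' := m2.filter (fun x => x ∉ A1) with hl2'
    have hmem2' : ∀ x ∈ l2', x ∉ A1 := fun x hx => by
      have := List.of_mem_filter hx; simpa using this
    set l := mrg f m1 l2' with hl
    have hperml : List.Perm l (m1 ++ l2') := mrg_perm f m1 l2'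
    have hndl : l.Nodup := by
      rw [hperml.nodup_iff]
      rw [List.nodup_append]
      exact ⟨hnd1, hnd2.filter _, fun a ha b hb hab => hmem2' b hb (hab ▸ hmemm1 a ha)⟩
    have htfl : l.toFinset = A := by
      ext x
      rw [List.mem_toFinset, hperml.mem_iff, List.mem_append]
      constructor
      · rintro (h | h)
        · exact hA1A (hmemm1 x h)
        · exact hA2A (hmemm2 x (List.mem_of_mem_filter h))
      · intro hx
        have : x ∈ A1 ∨ x ∈ A2 := by rw [← Finset.mem_union, hun]; exact hx
        by_cases hx1 : x ∈ A1
        · left; rw [← List.mem_toFinset, htf1]; exact hx1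
        · right
          rcases this with h | h
          · exact absurd h hx1
          · apply List.mem_filter.2
            refine ⟨?_, by simpa using hx1⟩
            have hm : x ∈ m2.toFinset := by rw [htf2]; exact h
            exact List.mem_toFinset.1 hm
    have hsortl : l.Pairwise (fun φ ψ => f ψ ≤ f φ) :=
      mrg_sorted f m1 l2' hs1f (hs2f.sublist (List.filter_sublist (l := m2)))
    obtain ⟨hS1, hS2, heq⟩ := greedy_split hΓ hIOD' hcomp hndl htfl hsortl
    have hf1 : l.filter (fun x => x ∈ A1) = m1 :=
      mrg_filter_pos f (fun x => x ∈ A1) m1 l2' hmemm1 hmem2'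
    have hf2' : l.filter (fun x => x ∉ A1) = l2' :=
      mrg_filter_neg f (fun x => x ∈ A1) m1 l2' hmemm1 hmem2'
    -- the induced enumeration of A2 has the same greedy output as m2
    set t := l.filter (fun x => x ∈ A2) with ht
    have hmemt : ∀ x ∈ t, x ∈ A2 := fun x hx => by
      have := List.of_mem_filter hx; simpa using this
    have htft : t.toFinset = A2 := by
      ext x
      simp only [ht, List.mem_toFinset, List.mem_filter, decide_eq_true_eq]
      constructor
      · rintro ⟨_, h⟩; exact h
      · intro h
        exact ⟨by rw [← List.mem_toFinset, htfl]; exact hA2A h, h⟩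
    have hfilt : t.filter (fun x => x ∉ A1) = m2.filter (fun x => x ∉ A1) := by
      have h1 : t.filter (fun x => x ∉ A1) = (l.filter (fun x => x ∉ A1)).filter
          (fun x => x ∈ A2) := by
        rw [ht, List.filter_filter, List.filter_filter]
        exact List.filter_congr (fun x _ => by rw [Bool.and_comm])
      rw [h1, hf2', ← hl2']
      rw [List.filter_eq_self.2 (fun a ha => by
        simpa using hmemm2 a (List.mem_of_mem_filter ha))]
    have hF : ∀ m : List (Finset V), m.Nodup → m.toFinset = A2 →
        m.Pairwise (fun a b => f b ≤ f a) → greedy Γ m ∅ ∩ A1 = greedy Γ m1 ∅ ∩ A2 := by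
      intro m hm1 hm2 hm3
      have hmm : ∀ x ∈ m, x ∈ A2 := fun x hx => hm2 ▸ List.mem_toFinset.2 hx
      have hmRA : greedy Γ m ∅ ∈ RA Γ A2 (restrict P A2) :=
        ⟨m, hm1, hm2, (sorted_restrict_iff hmm).2 hm3, rfl⟩
      have hJ1RA : greedy Γ m1 ∅ ∈ RA Γ A1 (restrict P A1) :=
        ⟨m1, hnd1, htf1, hsort1, rfl⟩
      exact (hcomp _ hJ1RA _ hmRA).symm
    have hK2 : greedy Γ t ∅ = greedy Γ m2 ∅ := by
      have := greedy_transform hF m2 t []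
        (by simpa using hndl.filter _)
        (by simpa using hnd2)
        (by simpa using hsortl.sublist (List.filter_sublist (l := l)))
        (by simpa using hs2f)
        (by simpa using htft)
        (by simpa using htf2)
        (by rw [htft, htf2])
        hfilt
      simpa using this
    refine ⟨l, hndl, htfl, hsortl, ?_⟩
    rw [heq, hf1, hK2]

end JA
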